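/- arXiv:2304.03924 — 3 statements merged into one kernel-verified Lean document; each statement's English description precedes it below -/
import Mathlib

section
/- The reliability vector sequence R satisfies the renewal equation R = (S q)_U + q_{UU} * R, and consequently R = (δI − q_{UU})^{(−1)} * (S q)_U = ψ_{UU} * (S q)_U. -/
open MeasureTheory Filter Topology Finset ProbabilityTheory

noncomputable section

namespace SMCPaper

variable {E : Type} [Fintype E] [DecidableEq E] {Ω : Type} [MeasurableSpace Ω]

/-- `q` is a (discrete-time) semi-Markov kernel on the finite state space `E`:
nonnegative entries, `q i j 0 = 0`, and total mass `1` from every state. -/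
def IsSemiMarkovKernel (q : E → E → ℕ → ℝ) : Prop :=
  (∀ i j k, 0 ≤ q i j k) ∧ (∀ i j, q i j 0 = 0) ∧
    ∀ i, HasSum (fun p : E × ℕ => q i p.1 p.2) 1

/-- The sojourn times `X n = S n − S (n−1)` (so `X 0 = 0` when `S 0 = 0`). -/
def Xproc (S : ℕ → Ω → ℕ) (n : ℕ) (ω : Ω) : ℕ := S n ω - S (n - 1) ω

/-- `(J, S)` is a Markov renewal chain with semi-Markov kernel `q` under the family of
probability measures `P i₀` (the chain starting at `i₀`):  `J 0 = i₀`, `S 0 = 0` a.s., and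
the process `(J, X)` is a time-homogeneous Markov chain with transitions
`P(J_{n+1} = j, X_{n+1} = k | J_n = i, past) = q i j k`. -/
def IsMarkovRenewalChain (P : E → Measure Ω) (J : ℕ → Ω → E) (S : ℕ → Ω → ℕ)
    (q : E → E → ℕ → ℝ) : Prop :=
  (∀ i, IsProbabilityMeasure (P i)) ∧
  (∀ n i, MeasurableSet {ω | J n ω = i}) ∧
  (∀ n k, MeasurableSet {ω | S n ω = k}) ∧
  (∀ i₀, P i₀ {ω | J 0 ω = i₀ ∧ S 0 ω = 0} = 1) ∧
  (∀ i₀ (n : ℕ) (js : ℕ → E) (xs : ℕ → ℕ),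
    P i₀ ({ω | J (n+1) ω = js (n+1) ∧ Xproc S (n+1) ω = xs (n+1)} ∩
        {ω | ∀ l ≤ n, J l ω = js l ∧ Xproc S l ω = xs l}) =
      ENNReal.ofReal (q (js n) (js (n+1)) (xs (n+1))) *
        P i₀ {ω | ∀ l ≤ n, J l ω = js l ∧ Xproc S l ω = xs l})

/-- First hitting time (after time `0`) of the state `j` by the embedded chain `J`. -/
def tau (J : ℕ → Ω → E) (j : E) (ω : Ω) : ℕ := sInf {n | 1 ≤ n ∧ J n ω = j}

/-- Mean recurrence time `μ_{ii} = E_i[S_{τ_i}]`. -/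
def mrt (P : E → Measure Ω) (J : ℕ → Ω → E) (S : ℕ → Ω → ℕ) (i : E) : ℝ :=
  ∫ ω, (S (tau J i ω) ω : ℝ) ∂(P i)

/-- Assumption (A): irreducibility of the embedded chain, aperiodicity of the Markov
renewal chain, and positive recurrence. -/
def AssumptionA (P : E → Measure Ω) (J : ℕ → Ω → E) (S : ℕ → Ω → ℕ) : Prop :=
  (∀ i j : E, 0 < P i {ω | ∃ n, 1 ≤ n ∧ J n ω = j}) ∧
  (∀ i : E, ∀ d : ℕ,
      (∀ k, 0 < P i {ω | S (tau J i ω) ω = k} → d ∣ k) → d = 1) ∧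
  (∀ i : E, (∀ᵐ ω ∂(P i), ∃ n, 1 ≤ n ∧ J n ω = i) ∧
      Integrable (fun ω => (S (tau J i ω) ω : ℝ)) (P i))

/-- `N(M)`: the number of jumps of the Markov renewal chain up to time `M`. -/
def Ncnt (S : ℕ → Ω → ℕ) (M : ℕ) (ω : Ω) : ℕ := sSup {n | S n ω ≤ M}

/-- `N_i(M)`: the number of visits of the embedded chain to `i` before time `M`. -/
def Nvis (J : ℕ → Ω → E) (S : ℕ → Ω → ℕ) (i : E) (M : ℕ) (ω : Ω) : ℕ :=
  ∑ n ∈ Finset.Icc 1 (Ncnt S M ω), if J (n-1) ω = i then 1 else 0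

/-- The empirical (nonparametric) estimator `q̂(M)` of the semi-Markov kernel. -/
def qhat (J : ℕ → Ω → E) (S : ℕ → Ω → ℕ) (M : ℕ) (ω : Ω) (i j : E) (k : ℕ) : ℝ :=
  (∑ n ∈ Finset.Icc 1 (Ncnt S M ω),
      if J (n-1) ω = i ∧ J n ω = j ∧ Xproc S n ω = k then (1:ℝ) else 0) /
    (Nvis J S i M ω : ℝ)

/-- The entry of a matrix sequence at `e = (i, j, k)`. -/
def entry (A : E → E → ℕ → ℝ) (e : E × E × ℕ) : ℝ := A e.1 e.2.1 e.2.2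

/-- Matrix convolution of matrix sequences. -/
def mconv (A B : E → E → ℕ → ℝ) : E → E → ℕ → ℝ := fun i j k =>
  ∑ l ∈ Finset.range (k+1), ∑ u, A i u l * B u j (k - l)

/-- Convolution of scalar sequences. -/
def sconv (a b : ℕ → ℝ) : ℕ → ℝ := fun k => ∑ l ∈ Finset.range (k+1), a l * b (k - l)

/-- The identity `δI` for matrix convolution. -/
def deltaI : E → E → ℕ → ℝ := fun i j k => if i = j ∧ k = 0 then 1 else 0

/-- `n`-fold matrix convolution power. -/
def mpow (A : E → E → ℕ → ℝ) : ℕ → E → E → ℕ → ℝ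
  | 0 => deltaI
  | n + 1 => mconv A (mpow A n)

/-- The convolution inverse `(δI − A)^{(−1)} = ∑_{n ≥ 0} A^{(n)}`. -/
def psiOf (A : E → E → ℕ → ℝ) : E → E → ℕ → ℝ := fun i j k => ∑' n, mpow A n i j k

/-- The operator `S`: `(S A)_{ij}(k) = 1{i=j} ∑_{j'} ∑_{k' > k} A_{ij'}(k')`. -/
def Sop (A : E → E → ℕ → ℝ) : E → E → ℕ → ℝ := fun i j k =>
  if i = j then ∑' p : E × ℕ, if k < p.2 then A i p.1 p.2 else 0 else 0

/-- Cumulative sum of a scalar sequence, `(cumul a) k = ∑_{l ≤ k} a l`. -/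
def cumul (a : ℕ → ℝ) (k : ℕ) : ℝ := ∑ l ∈ Finset.range (k+1), a l

/-- `H_j(k) = ∑_{j'} ∑_{k' ≤ k} q_{jj'}(k')`, the sojourn time c.d.f. in state `j`. -/
def Hseq (q : E → E → ℕ → ℝ) (j : E) (k : ℕ) : ℝ :=
  ∑ j', ∑ l ∈ Finset.range (k+1), q j j' l

/-- The matrix sequence `δ^{et}` with entry `1` at `et` and `0` elsewhere. -/
def deltaM (et : E × E × ℕ) : E → E → ℕ → ℝ := fun i j k => if (i, j, k) = et then 1 else 0

/-- The matrix sequence `q^{it}` with `q^{it}_{ij}(k) = 1{i = it} q_{ij}(k)`. -/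
def qres (q : E → E → ℕ → ℝ) (it : E) : E → E → ℕ → ℝ :=
  fun i j k => if i = it then q i j k else 0

/-- The semi-Markov chain `Z_k = J_{N(k)}` associated to `(J, S)`. -/
def Zproc (J : ℕ → Ω → E) (S : ℕ → Ω → ℕ) (k : ℕ) (ω : Ω) : E := J (Ncnt S k ω) ω

/-- The distribution matrix sequence `P_{ij}(k) = P_i(Z_k = j)` of the semi-Markov chain. -/
def Pdist (P : E → Measure Ω) (J : ℕ → Ω → E) (S : ℕ → Ω → ℕ) (i j : E) (k : ℕ) : ℝ :=
  (P i {ω | Zproc J S k ω = j}).toReal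

/-- The estimator `P̂(M) = ψ̂(M) * S q̂(M)` of the distribution matrix sequence. -/
def Phat (J : ℕ → Ω → E) (S : ℕ → Ω → ℕ) (M : ℕ) (ω : Ω) : E → E → ℕ → ℝ :=
  mconv (psiOf (qhat J S M ω)) (Sop (qhat J S M ω))

/-- The reliability vector sequence `R_i(k) = P_i(T_D > k)`, for `i ∈ U`,
where `D = Uᶜ` and `T_D` is the first entrance time of `Z` into `D`. -/
def Rrel (P : E → Measure Ω) (J : ℕ → Ω → E) (S : ℕ → Ω → ℕ) (U : Finset E)
    (i : E) (k : ℕ) : ℝ :=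
  (P i {ω | ∀ l ≤ k, Zproc J S l ω ∈ U}).toReal

/-- Restriction of a matrix sequence to `Ũ = U × U × ℕ` (extended by `0`). -/
def restrictUU (U : Finset E) (A : E → E → ℕ → ℝ) : E → E → ℕ → ℝ :=
  fun i j k => if i ∈ U ∧ j ∈ U then A i j k else 0

/-- Convolution of a matrix sequence with a vector sequence. -/
def mvconv (A : E → E → ℕ → ℝ) (v : E → ℕ → ℝ) : E → ℕ → ℝ := fun i k =>
  ∑ l ∈ Finset.range (k+1), ∑ u, A i u l * v u (k - l)

/-- The diagonal `(A)_U` of a matrix sequence, as a vector sequence. -/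
def diagOf (A : E → E → ℕ → ℝ) : E → ℕ → ℝ := fun i k => A i i k

/-- The estimator `R̂(M) = ψ̂_UU(M) * (S q̂(M))_U` of the reliability vector sequence. -/
def Rhat (J : ℕ → Ω → E) (S : ℕ → Ω → ℕ) (U : Finset E) (M : ℕ) (ω : Ω) : E → ℕ → ℝ :=
  mvconv (psiOf (restrictUU U (qhat J S M ω))) (diagOf (Sop (qhat J S M ω)))

/-- `μG` is the law of a centered Gaussian family indexed by `ι` with covariance `V`:
every finite linear combination of coordinates has a centered normal distribution with the
appropriate variance. -/
def IsCenteredGaussianLaw {ι : Type} (μG : Measure (ι → ℝ)) (V : ι → ι → ℝ) : Prop :=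
  ∀ a : ι →₀ ℝ,
    Measure.map (fun x => ∑ e ∈ a.support, a e * x e) μG =
      gaussianReal 0
        (Real.toNNReal (∑ e ∈ a.support, ∑ e' ∈ a.support, a e * V e e' * a e'))

/-- `(Z_e)_{e ∈ ι}` is a centered Gaussian family with covariance `V` under `P`. -/
def IsCenteredGaussianFamily {ι : Type} (P : Measure Ω) (Z : ι → Ω → ℝ)
    (V : ι → ι → ℝ) : Prop :=
  (∀ e, Measurable (Z e)) ∧
  ∀ a : ι →₀ ℝ,
    Measure.map (fun ω => ∑ e ∈ a.support, a e * Z e ω) P =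
      gaussianReal 0
        (Real.toNNReal (∑ e ∈ a.support, ∑ e' ∈ a.support, a e * V e e' * a e'))

/-- The covariance matrix `V^q` of the CLT for `q̂`, with `μr i = μ_{ii}`. -/
def Vq (q : E → E → ℕ → ℝ) (μr : E → ℝ) : (E × E × ℕ) → (E × E × ℕ) → ℝ := fun e e' =>
  μr e.1 * (if e.1 = e'.1 then 1 else 0) * entry q e *
    ((if e.2.1 = e'.2.1 ∧ e.2.2 = e'.2.2 then 1 else 0) - entry q e')


/-! ### Auxiliary algebra for convolutions -/

lemma mk_sconv (a b : ℕ → ℝ) :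
    PowerSeries.mk (sconv a b) = PowerSeries.mk a * PowerSeries.mk b := by
  ext k
  rw [PowerSeries.coeff_mk, PowerSeries.coeff_mul,
    Finset.Nat.sum_antidiagonal_eq_sum_range_succ_mk]
  simp [sconv]

lemma sconv_eq_coeff (a b : ℕ → ℝ) (k : ℕ) :
    sconv a b k = PowerSeries.coeff k (PowerSeries.mk a * PowerSeries.mk b) := by
  rw [← mk_sconv, PowerSeries.coeff_mk]

lemma sconv_assoc (a b c : ℕ → ℝ) : sconv (sconv a b) c = sconv a (sconv b c) := by
  funext k
  rw [sconv_eq_coeff, sconv_eq_coeff, mk_sconv, mk_sconv, mul_assoc]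

lemma sconv_sum_left {ι : Type*} (s : Finset ι) (a : ι → ℕ → ℝ) (b : ℕ → ℝ) (k : ℕ) :
    sconv (fun k' => ∑ w ∈ s, a w k') b k = ∑ w ∈ s, sconv (a w) b k := by
  simp only [sconv, Finset.sum_mul]
  exact Finset.sum_comm

lemma sconv_sum_right {ι : Type*} (s : Finset ι) (a : ℕ → ℝ) (b : ι → ℕ → ℝ) (k : ℕ) :
    sconv a (fun k' => ∑ w ∈ s, b w k') k = ∑ w ∈ s, sconv a (b w) k := by
  simp only [sconv, Finset.mul_sum]
  exact Finset.sum_comm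

lemma mconv_eq_sum_sconv (A B : E → E → ℕ → ℝ) (i j : E) (k : ℕ) :
    mconv A B i j k = ∑ u, sconv (A i u) (B u j) k := by
  unfold mconv sconv
  exact Finset.sum_comm

lemma mvconv_eq_sum_sconv (A : E → E → ℕ → ℝ) (v : E → ℕ → ℝ) (i : E) (k : ℕ) :
    mvconv A v i k = ∑ u, sconv (A i u) (v u) k := by
  unfold mvconv sconv
  exact Finset.sum_comm

lemma mvconv_assoc (A B : E → E → ℕ → ℝ) (v : E → ℕ → ℝ) (i : E) (k : ℕ) :
    mvconv (mconv A B) v i k = mvconv A (mvconv B v) i k := by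
  rw [mvconv_eq_sum_sconv, mvconv_eq_sum_sconv]
  have h1 : ∀ u, sconv (mconv A B i u) (v u) k
      = ∑ w, sconv (sconv (A i w) (B w u)) (v u) k := by
    intro u
    have : mconv A B i u = fun k' => ∑ w, sconv (A i w) (B w u) k' := by
      funext k'; exact mconv_eq_sum_sconv A B i u k'
    rw [this, sconv_sum_left]
  have h2 : ∀ w, sconv (A i w) (mvconv B v w) k
      = ∑ u, sconv (A i w) (sconv (B w u) (v u)) k := by
    intro w
    have : mvconv B v w = fun k' => ∑ u, sconv (B w u) (v u) k' := by
      funext k'; exact mvconv_eq_sum_sconv B v w k'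
    rw [this, sconv_sum_right]
  simp only [h1, h2, sconv_assoc]
  exact Finset.sum_comm

lemma mvconv_deltaI (v : E → ℕ → ℝ) (i : E) (k : ℕ) : mvconv deltaI v i k = v i k := by
  unfold mvconv deltaI
  rw [Finset.sum_eq_single 0]
  · rw [Finset.sum_eq_single i]
    · simp
    · intro b _ hb
      simp [Ne.symm hb]
    · simp
  · intro l _ hl
    apply Finset.sum_eq_zero; intro u _
    simp [hl]
  · simp

lemma mpow_eq_zero_of_lt {A : E → E → ℕ → ℝ} (hA0 : ∀ i j, A i j 0 = 0) :
    ∀ n i j k, k < n → mpow A n i j k = 0 := by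
  intro n
  induction n with
  | zero => intro i j k h; omega
  | succ n ih =>
    intro i j k h
    unfold mpow mconv
    apply Finset.sum_eq_zero; intro l hl
    apply Finset.sum_eq_zero; intro u _
    rcases Nat.eq_zero_or_pos l with rfl | hl1
    · simp [hA0]
    · rw [ih u j (k - l) (by simp at hl; omega), mul_zero]

lemma psiOf_eq_sum {A : E → E → ℕ → ℝ} (hA0 : ∀ i j, A i j 0 = 0) (i j : E) (k m : ℕ)
    (hm : k < m) : psiOf A i j k = ∑ n ∈ Finset.range m, mpow A n i j k := by
  unfold psiOf
  exact tsum_eq_sum (fun n hn => mpow_eq_zero_of_lt hA0 n i j k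
    (by simp only [Finset.mem_range, not_lt] at hn; omega))

lemma psiOf_rec {A : E → E → ℕ → ℝ} (hA0 : ∀ i j, A i j 0 = 0) (i j : E) (k : ℕ) :
    psiOf A i j k = deltaI i j k + mconv A (psiOf A) i j k := by
  rw [psiOf_eq_sum hA0 i j k (k+2) (by omega), Finset.sum_range_succ']
  have h1 : mconv A (psiOf A) i j k
      = ∑ l ∈ Finset.range (k+1), ∑ u, ∑ n ∈ Finset.range (k+1),
          A i u l * mpow A n u j (k - l) := by
    unfold mconv
    refine Finset.sum_congr rfl fun l hl => Finset.sum_congr rfl fun u _ => ?_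
    rw [psiOf_eq_sum hA0 u j (k - l) (k+1)
      (by simp only [Finset.mem_range] at hl; omega), Finset.mul_sum]
  have h2 : ∑ n ∈ Finset.range (k+1), mpow A (n+1) i j k
      = ∑ l ∈ Finset.range (k+1), ∑ u, ∑ n ∈ Finset.range (k+1),
          A i u l * mpow A n u j (k - l) := by
    have : ∀ n, mpow A (n+1) i j k
        = ∑ l ∈ Finset.range (k+1), ∑ u, A i u l * mpow A n u j (k - l) := fun n => rfl
    simp only [this]
    rw [Finset.sum_comm]
    exact Finset.sum_congr rfl fun l _ => Finset.sum_comm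
  rw [h1, ← h2, add_comm]
  rfl

lemma mvconv_add (A B : E → E → ℕ → ℝ) (v : E → ℕ → ℝ) (i : E) (k : ℕ) :
    mvconv (fun i' j' k' => A i' j' k' + B i' j' k') v i k
      = mvconv A v i k + mvconv B v i k := by
  simp [mvconv, add_mul, Finset.sum_add_distrib]

/-- The solution `w = ψ_A * v` satisfies the renewal equation `w = v + A * w`. -/
lemma mvconv_psiOf_rec {A : E → E → ℕ → ℝ} (hA0 : ∀ i j, A i j 0 = 0)
    (v : E → ℕ → ℝ) (i : E) (k : ℕ) :
    mvconv (psiOf A) v i k = v i k + mvconv A (mvconv (psiOf A) v) i k := by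
  have h : mvconv (psiOf A) v i k
      = mvconv (fun i' j' k' => deltaI i' j' k' + mconv A (psiOf A) i' j' k') v i k := by
    unfold mvconv
    apply Finset.sum_congr rfl; intro l _
    apply Finset.sum_congr rfl; intro u _
    rw [psiOf_rec hA0]
  rw [h, mvconv_add, mvconv_deltaI, mvconv_assoc]

/-! ### The combinatorial reliability sequence `Rc` -/

/-- `dS q i k = ∑_{u, x > k} q i u x`, the diagonal of `Sop q`. -/
def dS (q : E → E → ℕ → ℝ) (i : E) (k : ℕ) : ℝ :=
  ∑' p : E × ℕ, if k < p.2 then q i p.1 p.2 else 0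

lemma diagOf_Sop_eq (q : E → E → ℕ → ℝ) (i : E) (k : ℕ) :
    diagOf (Sop q) i k = dS q i k := by
  simp [diagOf, Sop, dS]

/-- The unique solution of the renewal equation, defined by recursion. -/
def Rc (q : E → E → ℕ → ℝ) (U : Finset E) : ℕ → E → ℝ
  | 0 => fun i => dS q i 0
  | (k+1) => fun i => dS q i (k+1) + ∑ l ∈ Finset.range (k+1), ∑ u,
      (if u ∈ U then q i u (l+1) * Rc q U (k - l) u else 0)
  decreasing_by omega

lemma Rc_eq (q : E → E → ℕ → ℝ) (U : Finset E) (hq0 : ∀ i j, q i j 0 = 0) (k : ℕ) (i : E) :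
    Rc q U k i = dS q i k + ∑ l ∈ Finset.range (k+1), ∑ u,
      (if u ∈ U then q i u l * Rc q U (k - l) u else 0) := by
  cases k with
  | zero => simp [Rc, hq0]
  | succ k =>
    rw [Finset.sum_range_succ']
    have h0 : (∑ u, if u ∈ U then q i u 0 * Rc q U (k + 1 - 0) u else 0) = 0 := by
      apply Finset.sum_eq_zero; intro u _; simp [hq0]
    rw [h0, add_zero, Rc]
    simp only [Nat.succ_sub_succ_eq_sub]

lemma dS_nonneg (q : E → E → ℕ → ℝ) (hqn : ∀ i j k, 0 ≤ q i j k) (i : E) (k : ℕ) :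
    0 ≤ dS q i k :=
  tsum_nonneg (fun p => by by_cases h : k < p.2 <;> simp [dS, h, hqn])

lemma Rc_nonneg (q : E → E → ℕ → ℝ) (U : Finset E) (hqn : ∀ i j k, 0 ≤ q i j k)
    (hq0 : ∀ i j, q i j 0 = 0) : ∀ k i, 0 ≤ Rc q U k i := by
  intro k
  induction k using Nat.strong_induction_on with
  | _ k ih =>
    intro i
    rw [Rc_eq q U hq0]
    apply add_nonneg (dS_nonneg q hqn i k)
    apply Finset.sum_nonneg; intro l hl
    apply Finset.sum_nonneg; intro u _
    split
    · rcases Nat.eq_zero_or_pos l with rfl | hl1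
      · simp [hq0]
      · simp only [Finset.mem_range] at hl
        exact mul_nonneg (hqn _ _ _) (ih (k - l) (by omega) u)
    · exact le_refl 0

lemma restrictUU_zero (q : E → E → ℕ → ℝ) (U : Finset E) (hq0 : ∀ i j, q i j 0 = 0) :
    ∀ i j, restrictUU U q i j 0 = 0 := by
  intro i j; simp [restrictUU, hq0]

lemma Rc_eq_mvconv (q : E → E → ℕ → ℝ) (U : Finset E) (hq0 : ∀ i j, q i j 0 = 0) :
    ∀ k, ∀ i ∈ U, Rc q U k i
      = mvconv (psiOf (restrictUU U q)) (diagOf (Sop q)) i k := by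
  intro k
  induction k using Nat.strong_induction_on with
  | _ k ih =>
    intro i hi
    have hA0 := restrictUU_zero q U hq0
    rw [mvconv_psiOf_rec hA0, Rc_eq q U hq0, diagOf_Sop_eq]
    congr 1
    unfold mvconv
    apply Finset.sum_congr rfl; intro l hl
    apply Finset.sum_congr rfl; intro u _
    rcases Nat.eq_zero_or_pos l with rfl | hl1
    · simp [restrictUU, hq0]
    · simp only [Finset.mem_range] at hl
      rw [restrictUU]
      by_cases hu : u ∈ U
      · simp only [hi, hu, and_self, if_true, if_pos]
        rw [ih (k - l) (by omega) u hu]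
        rfl
      · simp [hu]

/-! ### Measure-theoretic preliminaries -/

/-- The cylinder event recording the first `n` jumps and sojourn times. -/
def Cyl (J : ℕ → Ω → E) (S : ℕ → Ω → ℕ) (n : ℕ) (js : ℕ → E) (xs : ℕ → ℕ) : Set Ω :=
  {ω | ∀ l ≤ n, J l ω = js l ∧ Xproc S l ω = xs l}

lemma Xproc_zero (S : ℕ → Ω → ℕ) (ω : Ω) : Xproc S 0 ω = 0 := by
  simp [Xproc]

lemma measurableSet_X {S : ℕ → Ω → ℕ} (hS : ∀ n k, MeasurableSet {ω | S n ω = k})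
    (l x : ℕ) : MeasurableSet {ω | Xproc S l ω = x} := by
  have : {ω | Xproc S l ω = x} = ⋃ p : ℕ × ℕ,
      if p.1 - p.2 = x then ({ω | S l ω = p.1} ∩ {ω | S (l-1) ω = p.2}) else ∅ := by
    ext ω
    simp only [Set.mem_iUnion, Set.mem_setOf_eq]
    constructor
    · intro h
      refine ⟨(S l ω, S (l-1) ω), ?_⟩
      rw [if_pos (show (S l ω, S (l-1) ω).1 - (S l ω, S (l-1) ω).2 = x from h)]
      exact ⟨rfl, rfl⟩
    · rintro ⟨p, hp⟩
      by_cases h : p.1 - p.2 = x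
      · rw [if_pos h] at hp
        obtain ⟨h1, h2⟩ := hp
        simp only [Set.mem_setOf_eq] at h1 h2
        rw [Xproc, h1, h2, h]
      · rw [if_neg h] at hp
        exact absurd hp (Set.notMem_empty ω)
  rw [this]
  refine MeasurableSet.iUnion fun p => ?_
  split
  · exact (hS l p.1).inter (hS (l-1) p.2)
  · exact MeasurableSet.empty

lemma measurableSet_Cyl {J : ℕ → Ω → E} {S : ℕ → Ω → ℕ}
    (hJ : ∀ n i, MeasurableSet {ω | J n ω = i})
    (hS : ∀ n k, MeasurableSet {ω | S n ω = k})
    (n : ℕ) (js : ℕ → E) (xs : ℕ → ℕ) : MeasurableSet (Cyl J S n js xs) := by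
  have : Cyl J S n js xs = ⋂ l, ⋂ (_ : l ≤ n),
      ({ω | J l ω = js l} ∩ {ω | Xproc S l ω = xs l}) := by
    ext ω; simp [Cyl]
  rw [this]
  exact MeasurableSet.iInter fun l => MeasurableSet.iInter fun _ =>
    (hJ l (js l)).inter (measurableSet_X hS l (xs l))

/-- Finite-additivity-based partition identity for an arbitrary (possibly
non-measurable) set `A` intersected with a countable disjoint measurable family. -/
lemma measure_inter_iUnion_eq {ι : Type*} [Countable ι]
    (μ : Measure Ω) {C : ι → Set Ω}
    (hC : ∀ i, MeasurableSet (C i)) (hd : Pairwise (Function.onFun Disjoint C))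
    (A : Set Ω) : μ (A ∩ ⋃ i, C i) = ∑' i, μ (A ∩ C i) := by
  classical
  apply le_antisymm
  · rw [Set.inter_iUnion]
    exact measure_iUnion_le _
  · rw [ENNReal.tsum_eq_iSup_sum]
    apply iSup_le; intro F
    have hfin : ∀ (F : Finset ι), ∑ i ∈ F, μ (A ∩ C i) = μ (A ∩ ⋃ i ∈ F, C i) := by
      intro F
      induction F using Finset.cons_induction_on with
      | empty => simp
      | cons _ _ ha ih =>
        rename_i a F
        have hdiff := measure_inter_add_diff (μ := μ) (A ∩ ⋃ i ∈ Finset.cons a F ha, C i)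
          (hC a)
        have h1 : (A ∩ ⋃ i ∈ Finset.cons a F ha, C i) ∩ C a = A ∩ C a := by
          ext ω
          simp only [Set.mem_inter_iff, Set.mem_iUnion, Finset.mem_cons]
          constructor
          · rintro ⟨⟨hA, _⟩, hCa⟩; exact ⟨hA, hCa⟩
          · rintro ⟨hA, hCa⟩; exact ⟨⟨hA, ⟨a, Or.inl rfl, hCa⟩⟩, hCa⟩
        have h2 : (A ∩ ⋃ i ∈ Finset.cons a F ha, C i) \ C a = A ∩ ⋃ i ∈ F, C i := by
          ext ω
          simp only [Set.mem_diff, Set.mem_inter_iff, Set.mem_iUnion, Finset.mem_cons]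
          constructor
          · rintro ⟨⟨hA, ⟨i, hi, hCi⟩⟩, hCa⟩
            rcases hi with rfl | hi
            · exact absurd hCi hCa
            · exact ⟨hA, ⟨i, hi, hCi⟩⟩
          · rintro ⟨hA, ⟨i, hi, hCi⟩⟩
            have hia : i ≠ a := by rintro rfl; exact ha hi
            refine ⟨⟨hA, ⟨i, Or.inr hi, hCi⟩⟩, fun hCa => ?_⟩
            exact Set.disjoint_left.mp (hd hia) hCi hCa
        rw [h1, h2] at hdiff
        calc ∑ i ∈ Finset.cons a F ha, μ (A ∩ C i)
            = μ (A ∩ C a) + ∑ i ∈ F, μ (A ∩ C i) := Finset.sum_cons ha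
          _ = μ (A ∩ C a) + μ (A ∩ ⋃ i ∈ F, C i) :=
              congrArg (fun z => μ (A ∩ C a) + z) ih
          _ = μ (A ∩ ⋃ i ∈ Finset.cons a F ha, C i) := hdiff
    rw [hfin F]
    exact measure_mono (Set.inter_subset_inter_right A
      (Set.iUnion₂_subset fun i _ => Set.subset_iUnion C i))

variable {P : E → Measure Ω} {J : ℕ → Ω → E} {S : ℕ → Ω → ℕ} {q : E → E → ℕ → ℝ}

lemma Cyl_succ (n : ℕ) (js : ℕ → E) (xs : ℕ → ℕ) :
    Cyl J S (n+1) js xs = {ω | J (n+1) ω = js (n+1) ∧ Xproc S (n+1) ω = xs (n+1)}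
      ∩ Cyl J S n js xs := by
  ext ω
  simp only [Cyl, Set.mem_inter_iff, Set.mem_setOf_eq]
  constructor
  · intro h
    exact ⟨h (n+1) le_rfl, fun l hl => h l (by omega)⟩
  · rintro ⟨h1, h2⟩ l hl
    rcases Nat.lt_or_ge l (n+1) with h | h
    · exact h2 l (by omega)
    · have : l = n + 1 := by omega
      rw [this]; exact h1

/-- The measure of a cylinder event. -/
lemma measure_Cyl (hq : IsSemiMarkovKernel q) (hchain : IsMarkovRenewalChain P J S q)
    (i₀ : E) (n : ℕ) (js : ℕ → E) (xs : ℕ → ℕ) :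
    P i₀ (Cyl J S n js xs) = if js 0 = i₀ ∧ xs 0 = 0 then
      ENNReal.ofReal (∏ l ∈ Finset.range n, q (js l) (js (l+1)) (xs (l+1))) else 0 := by
  obtain ⟨hprob, hJm, hSm, hinit, hmark⟩ := hchain
  induction n with
  | zero =>
    have hC0 : Cyl J S 0 js xs = if xs 0 = 0 then {ω | J 0 ω = js 0} else ∅ := by
      ext ω
      simp only [Cyl, Set.mem_setOf_eq]
      constructor
      · intro h
        obtain ⟨h1, h2⟩ := h 0 le_rfl
        rw [Xproc_zero] at h2
        rw [if_pos h2.symm]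
        exact h1
      · intro h
        by_cases hx : xs 0 = 0
        · rw [if_pos hx] at h
          intro l hl
          interval_cases l
          exact ⟨h, by rw [Xproc_zero, hx]⟩
        · rw [if_neg hx] at h
          exact absurd h (Set.notMem_empty ω)
    rw [hC0]
    by_cases hx : xs 0 = 0
    · rw [if_pos hx]
      by_cases hj : js 0 = i₀
      · rw [if_pos ⟨hj, hx⟩]
        simp only [Finset.range_zero, Finset.prod_empty, ENNReal.ofReal_one]
        haveI := hprob i₀
        have hsub : {ω | J 0 ω = i₀ ∧ S 0 ω = 0} ⊆ {ω | J 0 ω = js 0} := by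
          intro ω hω; rw [hj]; exact hω.1
        have := measure_mono (μ := P i₀) hsub
        rw [hinit i₀] at this
        have hle : P i₀ {ω | J 0 ω = js 0} ≤ 1 := prob_le_one
        exact le_antisymm hle (by simpa using this)
      · rw [if_neg (by tauto)]
        haveI := hprob i₀
        have hsub : {ω | J 0 ω = js 0} ⊆ {ω | J 0 ω = i₀ ∧ S 0 ω = 0}ᶜ := by
          intro ω hω hω'
          exact hj (hω ▸ hω'.1 ▸ rfl)
        have hcompl : P i₀ ({ω | J 0 ω = i₀ ∧ S 0 ω = 0}ᶜ) = 0 := by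
          have hm : MeasurableSet {ω | J 0 ω = i₀ ∧ S 0 ω = 0} := by
            have : {ω | J 0 ω = i₀ ∧ S 0 ω = 0}
                = {ω | J 0 ω = i₀} ∩ {ω | S 0 ω = 0} := rfl
            rw [this]; exact (hJm 0 i₀).inter (hSm 0 0)
          rw [measure_compl hm (measure_ne_top _ _), hinit i₀]
          simp
        exact le_antisymm (le_trans (measure_mono hsub) hcompl.le) (zero_le)
    · rw [if_neg hx, if_neg (by tauto)]
      exact MeasureTheory.measure_empty (μ := P i₀)
  | succ n ih =>
    rw [Cyl_succ]
    have := hmark i₀ n js xs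
    rw [show ({ω | J (n+1) ω = js (n+1) ∧ Xproc S (n+1) ω = xs (n+1)}
        ∩ {ω | ∀ l ≤ n, J l ω = js l ∧ Xproc S l ω = xs l}) =
      ({ω | J (n+1) ω = js (n+1) ∧ Xproc S (n+1) ω = xs (n+1)} ∩ Cyl J S n js xs) from rfl]
      at this
    rw [show {ω | ∀ l ≤ n, J l ω = js l ∧ Xproc S l ω = xs l} = Cyl J S n js xs from rfl]
      at this
    rw [this, ih]
    by_cases hc : js 0 = i₀ ∧ xs 0 = 0
    · rw [if_pos hc, if_pos hc, Finset.prod_range_succ,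
        ← ENNReal.ofReal_mul (hq.1 (js n) (js (n+1)) (xs (n+1))), mul_comm]
    · rw [if_neg hc, if_neg hc, mul_zero]

/-- The probability that some sojourn time vanishes is zero. -/
lemma X_succ_zero_null (hq : IsSemiMarkovKernel q)
    (hchain : IsMarkovRenewalChain P J S q) (i₀ : E) (n : ℕ) :
    P i₀ {ω | Xproc S (n+1) ω = 0} = 0 := by
  classical
  obtain ⟨hprob, hJm, hSm, hinit, hmark⟩ := hchain
  set ι := E × ((Fin (n+1) → E) × (Fin (n+1) → ℕ)) with hι
  let jsf : ι → ℕ → E := fun c l => if h : l < n+1 then c.2.1 ⟨l, h⟩ else c.1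
  let xsf : ι → ℕ → ℕ := fun c l => if h : l < n+1 then c.2.2 ⟨l, h⟩ else 0
  have hcover : {ω | Xproc S (n+1) ω = 0} ⊆ ⋃ c : ι,
      ({ω | J (n+1) ω = jsf c (n+1) ∧ Xproc S (n+1) ω = xsf c (n+1)}
        ∩ {ω | ∀ l ≤ n, J l ω = jsf c l ∧ Xproc S l ω = xsf c l}) := by
    intro ω hω
    refine Set.mem_iUnion.mpr
      ⟨(J (n+1) ω, (fun l => J l.1 ω, fun l => Xproc S l.1 ω)), ?_, ?_⟩
    · refine ⟨?_, ?_⟩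
      · simp [jsf]
      · simp only [Set.mem_setOf_eq] at hω
        simp [xsf, hω]
    · intro l hl
      have hl' : l < n+1 := by omega
      exact ⟨by simp [jsf, hl']; intro h; omega, by simp [xsf, hl']; intro h; omega⟩
  refine le_antisymm (le_trans (measure_mono (μ := P i₀) hcover) ?_) (zero_le)
  refine le_trans (measure_iUnion_le _) ?_
  have hzero : ∀ c : ι, P i₀
      ({ω | J (n+1) ω = jsf c (n+1) ∧ Xproc S (n+1) ω = xsf c (n+1)}
        ∩ {ω | ∀ l ≤ n, J l ω = jsf c l ∧ Xproc S l ω = xsf c l}) = 0 := by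
    intro c
    rw [hmark i₀ n (jsf c) (xsf c)]
    have hx0 : xsf c (n+1) = 0 := by simp [xsf]
    rw [hx0, hq.2.1, ENNReal.ofReal_zero, zero_mul]
  simp [hzero]

/-- The good set: correct start and strictly increasing jump times. -/
def Gset (J : ℕ → Ω → E) (S : ℕ → Ω → ℕ) (i₀ : E) : Set Ω :=
  {ω | J 0 ω = i₀ ∧ S 0 ω = 0} ∩ ⋂ m : ℕ, {ω | Xproc S (m+1) ω ≠ 0}

lemma Gset_compl_null (hq : IsSemiMarkovKernel q)
    (hchain : IsMarkovRenewalChain P J S q) (i₀ : E) :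
    P i₀ (Gset J S i₀)ᶜ = 0 := by
  have h1 : P i₀ ({ω | J 0 ω = i₀ ∧ S 0 ω = 0}ᶜ) = 0 := by
    have hm : MeasurableSet {ω | J 0 ω = i₀ ∧ S 0 ω = 0} := by
      have : {ω | J 0 ω = i₀ ∧ S 0 ω = 0} = {ω | J 0 ω = i₀} ∩ {ω | S 0 ω = 0} := rfl
      rw [this]; exact (hchain.2.1 0 i₀).inter (hchain.2.2.1 0 0)
    haveI := hchain.1 i₀
    rw [measure_compl hm (measure_ne_top _ _), hchain.2.2.2.1 i₀]
    simp
  have h2 : P i₀ (⋃ m : ℕ, {ω | Xproc S (m+1) ω ≠ 0}ᶜ) = 0 := by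
    refine le_antisymm (le_trans (measure_iUnion_le _) ?_) (zero_le)
    have : ∀ m : ℕ, P i₀ ({ω | Xproc S (m+1) ω ≠ 0}ᶜ) = 0 := by
      intro m
      have : {ω | Xproc S (m+1) ω ≠ 0}ᶜ = {ω | Xproc S (m+1) ω = 0} := by
        ext ω; simp
      rw [this]
      exact X_succ_zero_null hq hchain i₀ m
    simp [this]
  rw [Gset, Set.compl_inter, Set.compl_iInter]
  refine le_antisymm (le_trans (measure_union_le _ _) ?_) (zero_le)
  rw [h1, h2, add_zero]

lemma S_lt_succ_of_mem {ω : Ω} {i₀ : E} (hω : ω ∈ Gset J S i₀) (m : ℕ) :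
    S m ω < S (m+1) ω := by
  have hx : Xproc S (m+1) ω ≠ 0 := Set.mem_iInter.mp hω.2 m
  rw [Xproc] at hx
  simp only [Nat.add_sub_cancel] at hx
  omega

lemma S_strictMono_of_mem {ω : Ω} {i₀ : E} (hω : ω ∈ Gset J S i₀) :
    StrictMono (fun m => S m ω) :=
  strictMono_nat_of_lt_succ (S_lt_succ_of_mem hω)

lemma S_succ_of_mem {ω : Ω} {i₀ : E} (hω : ω ∈ Gset J S i₀) (m : ℕ) :
    S (m+1) ω = S m ω + Xproc S (m+1) ω := by
  have := S_lt_succ_of_mem hω m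
  rw [Xproc]
  simp only [Nat.add_sub_cancel]
  omega

lemma S_eq_sum_of_mem {ω : Ω} {i₀ : E} {n : ℕ} {js : ℕ → E} {xs : ℕ → ℕ}
    (hω : ω ∈ Gset J S i₀) (hc : ω ∈ Cyl J S n js xs) :
    ∀ m ≤ n, S m ω = ∑ l ∈ Finset.range m, xs (l+1) := by
  intro m
  induction m with
  | zero => intro _; simpa using hω.1.2
  | succ m ih =>
    intro hm
    rw [Finset.sum_range_succ, ← ih (by omega), S_succ_of_mem hω m,
      (hc (m+1) hm).2]

lemma Ncnt_eq_of_mem {ω : Ω} {i₀ : E} (hω : ω ∈ Gset J S i₀) {m l : ℕ}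
    (h1 : S m ω ≤ l) (h2 : l < S (m+1) ω) : Ncnt S l ω = m := by
  apply IsGreatest.csSup_eq
  constructor
  · exact h1
  · intro n hn
    by_contra hcon
    push_neg at hcon
    have : S (m+1) ω ≤ S n ω := (S_strictMono_of_mem hω).monotone (by omega)
    have : S n ω ≤ l := hn
    omega

lemma Zproc_eq_of_mem {ω : Ω} {i₀ : E} (hω : ω ∈ Gset J S i₀) {m l : ℕ}
    (h1 : S m ω ≤ l) (h2 : l < S (m+1) ω) : Zproc J S l ω = J m ω := by
  rw [Zproc, Ncnt_eq_of_mem hω h1 h2]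

lemma Gset_measurable (hchain : IsMarkovRenewalChain P J S q) (i₀ : E) :
    MeasurableSet (Gset J S i₀) := by
  apply MeasurableSet.inter
  · have : {ω | J 0 ω = i₀ ∧ S 0 ω = 0} = {ω | J 0 ω = i₀} ∩ {ω | S 0 ω = 0} := rfl
    rw [this]; exact (hchain.2.1 0 i₀).inter (hchain.2.2.1 0 0)
  · refine MeasurableSet.iInter fun m => ?_
    have : {ω | Xproc S (m+1) ω ≠ 0} = {ω | Xproc S (m+1) ω = 0}ᶜ := by
      ext ω; simp
    rw [this]
    exact (measurableSet_X hchain.2.2.1 (m+1) 0).compl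

/-- The key renewal computation for the reliability of the semi-Markov chain. -/
lemma key (hq : IsSemiMarkovKernel q) (hchain : IsMarkovRenewalChain P J S q)
    (U : Finset E) :
    ∀ k i₀ (n : ℕ) (js : ℕ → E) (xs : ℕ → ℕ), js 0 = i₀ → xs 0 = 0 →
      (∀ l ≤ n, js l ∈ U) →
      P i₀ ({ω | ∀ l ≤ (∑ m ∈ Finset.range n, xs (m+1)) + k, Zproc J S l ω ∈ U}
          ∩ Cyl J S n js xs)
        = ENNReal.ofReal ((∏ l ∈ Finset.range n, q (js l) (js (l+1)) (xs (l+1)))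
            * Rc q U k (js n)) := by
  intro k
  induction k using Nat.strong_induction_on with
  | _ k ih =>
    intro i₀ n js xs hjs0 hxs0 hjsU
    classical
    set s := ∑ m ∈ Finset.range n, xs (m+1) with hs
    set W := ∏ l ∈ Finset.range n, q (js l) (js (l+1)) (xs (l+1)) with hW
    set A := {ω | ∀ l ≤ s + k, Zproc J S l ω ∈ U} with hA
    set i := js n with hi
    have hW0 : 0 ≤ W := Finset.prod_nonneg (fun l _ => hq.1 _ _ _)
    have hGnull := Gset_compl_null hq hchain i₀
    have hGmeas := Gset_measurable hchain i₀
    -- the partition of the cylinder according to the next jump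
    let C : E × ℕ → Set Ω := fun p =>
      Cyl J S (n+1) (Function.update js (n+1) p.1) (Function.update xs (n+1) p.2)
    have hCm : ∀ p, MeasurableSet (C p) :=
      fun p => measurableSet_Cyl hchain.2.1 hchain.2.2.1 _ _ _
    have hCeq : Cyl J S n js xs = ⋃ p : E × ℕ, C p := by
      ext ω
      simp only [Set.mem_iUnion]
      constructor
      · intro h
        refine ⟨(J (n+1) ω, Xproc S (n+1) ω), fun l hl => ?_⟩
        rcases Nat.lt_or_ge l (n+1) with hl' | hl'
        · have hln : l ≠ n+1 := by omega
          rw [Function.update_of_ne hln, Function.update_of_ne hln]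
          exact h l (by omega)
        · have hl2 : l = n+1 := by omega
          subst hl2
          rw [Function.update_self, Function.update_self]
          exact ⟨rfl, rfl⟩
      · rintro ⟨p, hp⟩ l hl
        have hln : l ≠ n+1 := by omega
        have := hp l (by omega)
        rwa [Function.update_of_ne hln, Function.update_of_ne hln] at this
    have hCd : Pairwise (Function.onFun Disjoint C) := by
      intro p p' hpp'
      rw [Function.onFun, Set.disjoint_left]
      intro ω hω hω'
      have h1 := hω (n+1) le_rfl
      have h2 := hω' (n+1) le_rfl
      rw [Function.update_self, Function.update_self] at h1 h2
      exact hpp' (Prod.ext (h1.1 ▸ h2.1) (h1.2 ▸ h2.2))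
    have hsplit : P i₀ (A ∩ Cyl J S n js xs) = ∑' p : E × ℕ, P i₀ (A ∩ C p) := by
      rw [hCeq, measure_inter_iUnion_eq _ hCm hCd]
    -- the weights
    let t : E × ℕ → ℝ := fun p => if k < p.2 then q i p.1 p.2 else
        (if p.1 ∈ U then q i p.1 p.2 * Rc q U (k - p.2) p.1 else 0)
    have hRcn := Rc_nonneg q U hq.1 hq.2.1
    -- each piece of the partition
    have hval : ∀ p : E × ℕ, P i₀ (A ∩ C p) = ENNReal.ofReal (W * t p) := by
      rintro ⟨u, x⟩
      have hjs'0 : Function.update js (n+1) u 0 = i₀ := by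
        rw [Function.update_of_ne (by omega)]; exact hjs0
      have hxs'0 : Function.update xs (n+1) x 0 = 0 := by
        rw [Function.update_of_ne (by omega)]; exact hxs0
      have hprod : (∏ l ∈ Finset.range (n+1),
          q (Function.update js (n+1) u l) (Function.update js (n+1) u (l+1))
            (Function.update xs (n+1) x (l+1))) = W * q i u x := by
        rw [Finset.prod_range_succ]
        congr 1
        · rw [hW]
          apply Finset.prod_congr rfl
          intro l hl
          rw [Finset.mem_range] at hl
          rw [Function.update_of_ne (by omega : l ≠ n+1),
            Function.update_of_ne (by omega : l+1 ≠ n+1),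
            Function.update_of_ne (by omega : l+1 ≠ n+1)]
        · rw [Function.update_of_ne (by omega : n ≠ n+1), Function.update_self,
            Function.update_self, hi]
      have hCmeas : P i₀ (C (u, x)) = ENNReal.ofReal (W * q i u x) := by
        rw [show C (u, x) = Cyl J S (n+1) (Function.update js (n+1) u)
            (Function.update xs (n+1) x) from rfl,
          measure_Cyl hq hchain, if_pos ⟨hjs'0, hxs'0⟩, hprod]
      -- value of S (n+1) on the cylinder and the good set
      have hSval : ∀ ω, ω ∈ C (u, x) → ω ∈ Gset J S i₀ → S (n+1) ω = s + x := by
        intro ω hc hg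
        rw [S_eq_sum_of_mem hg hc (n+1) le_rfl, Finset.sum_range_succ,
          Function.update_self]
        congr 1
        rw [hs]
        apply Finset.sum_congr rfl
        intro m hm
        rw [Finset.mem_range] at hm
        rw [Function.update_of_ne (by omega : m+1 ≠ n+1)]
      rcases Nat.lt_or_ge k x with hkx | hxk
      · -- case `x > k` : the whole cylinder stays in `U` up to time `s + k`
        have hsub : C (u, x) ∩ Gset J S i₀ ⊆ A := by
          rintro ω ⟨hc, hg⟩
          intro l hl
          have hSn1 : S (n+1) ω = s + x := hSval ω hc hg
          set m₀ := Nat.findGreatest (fun m => S m ω ≤ l) n with hm₀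
          have hm₀le : m₀ ≤ n := Nat.findGreatest_le n
          have hS0 : S 0 ω = 0 := hg.1.2
          have hm₀P : S m₀ ω ≤ l := by
            rw [hm₀]
            exact Nat.findGreatest_spec (P := fun m => S m ω ≤ l) (Nat.zero_le n)
              (by show S 0 ω ≤ l; omega)
          have hm₀gt : l < S (m₀+1) ω := by
            rcases eq_or_lt_of_le hm₀le with he | hlt
            · rw [he, hSn1]; omega
            · by_contra hcon
              push_neg at hcon
              have := Nat.findGreatest_is_greatest (P := fun m => S m ω ≤ l) (n := n)
                (show Nat.findGreatest (fun m => S m ω ≤ l) n < m₀ + 1 by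
                  rw [← hm₀]; omega)
                (by omega)
              exact this hcon
          have hZ : Zproc J S l ω = J m₀ ω := Zproc_eq_of_mem hg hm₀P hm₀gt
          have hJ : J m₀ ω = js m₀ := by
            have := (hc m₀ (by omega)).1
            rwa [Function.update_of_ne (by omega : m₀ ≠ n+1)] at this
          show Zproc J S l ω ∈ U
          rw [hZ, hJ]
          exact hjsU m₀ hm₀le
        have h1 : P i₀ (A ∩ C (u, x)) ≤ P i₀ (C (u, x)) :=
          measure_mono Set.inter_subset_right
        have h2 : P i₀ (C (u, x)) ≤ P i₀ (A ∩ C (u, x)) := by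
          have := measure_inter_add_diff (μ := P i₀) (C (u, x)) hGmeas
          have hd : P i₀ (C (u, x) \ Gset J S i₀) = 0 :=
            le_antisymm (le_trans (measure_mono (Set.diff_subset_compl _ _)) hGnull.le)
              (zero_le)
          have hle : P i₀ (C (u, x) ∩ Gset J S i₀) ≤ P i₀ (A ∩ C (u, x)) :=
            measure_mono (fun ω hω => ⟨hsub hω, hω.1⟩)
          calc P i₀ (C (u, x)) = P i₀ (C (u, x) ∩ Gset J S i₀)
                + P i₀ (C (u, x) \ Gset J S i₀) := this.symm
            _ = P i₀ (C (u, x) ∩ Gset J S i₀) := by rw [hd, add_zero]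
            _ ≤ P i₀ (A ∩ C (u, x)) := hle
        rw [le_antisymm h1 h2, hCmeas]
        congr 2
        rw [show t (u, x) = if k < x then q i u x else
            (if u ∈ U then q i u x * Rc q U (k - x) u else 0) from rfl, if_pos hkx]
      · rcases Nat.eq_zero_or_pos x with rfl | hx1
        · -- case `x = 0` : null cylinder
          have hz : P i₀ (C (u, 0)) = 0 := by
            rw [hCmeas, hq.2.1, mul_zero, ENNReal.ofReal_zero]
          have hz' : P i₀ (A ∩ C (u, 0)) = 0 :=
            le_antisymm (le_trans (measure_mono Set.inter_subset_right) hz.le)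
              (zero_le)
          rw [hz']
          have ht0 : t (u, 0) = 0 := by
            rw [show t (u, 0) = if k < 0 then q i u 0 else
              (if u ∈ U then q i u 0 * Rc q U (k - 0) u else 0) from rfl]
            rw [if_neg (by omega), hq.2.1]
            simp
          rw [ht0, mul_zero, ENNReal.ofReal_zero]
        · by_cases hu : u ∈ U
          · -- main case: apply the induction hypothesis
            have hjsU' : ∀ l ≤ n+1, Function.update js (n+1) u l ∈ U := by
              intro l hl
              rcases Nat.lt_or_ge l (n+1) with hl' | hl'
              · rw [Function.update_of_ne (by omega)]
                exact hjsU l (by omega)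
              · have : l = n+1 := by omega
                rw [this, Function.update_self]
                exact hu
            have hIH := ih (k - x) (by omega) i₀ (n+1) (Function.update js (n+1) u)
              (Function.update xs (n+1) x) hjs'0 hxs'0 hjsU'
            have hsum' : ∑ m ∈ Finset.range (n+1), Function.update xs (n+1) x (m+1)
                = s + x := by
              rw [Finset.sum_range_succ, Function.update_self]
              congr 1
              rw [hs]
              apply Finset.sum_congr rfl
              intro m hm
              rw [Finset.mem_range] at hm
              rw [Function.update_of_ne (by omega : m+1 ≠ n+1)]
            rw [hsum', show s + x + (k - x) = s + k from by omega, hprod,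
              Function.update_self] at hIH
            rw [show (A ∩ C (u, x)) = ({ω | ∀ l ≤ s + k, Zproc J S l ω ∈ U}
              ∩ Cyl J S (n+1) (Function.update js (n+1) u)
                (Function.update xs (n+1) x)) from rfl]
            rw [hIH]
            congr 1
            rw [show t (u, x) = if k < x then q i u x else
              (if u ∈ U then q i u x * Rc q U (k - x) u else 0) from rfl]
            rw [if_neg (by omega), if_pos hu, mul_assoc]
          · -- case `u ∉ U` : the chain leaves `U` at time `s + x ≤ s + k`
            have hempty : A ∩ (C (u, x) ∩ Gset J S i₀) = ∅ := by
              ext ω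
              simp only [Set.mem_inter_iff, Set.mem_empty_iff_false, iff_false,
                not_and]
              intro hAω hc hg
              have hSn1 : S (n+1) ω = s + x := hSval ω hc hg
              have hSn2 : s + x < S (n+1+1) ω := by
                have := S_lt_succ_of_mem hg (n+1)
                omega
              have hZ : Zproc J S (s + x) ω = J (n+1) ω :=
                Zproc_eq_of_mem hg (le_of_eq hSn1) hSn2
              have hJ : J (n+1) ω = u := by
                have := (hc (n+1) le_rfl).1
                rwa [Function.update_self] at this
              have hin : Zproc J S (s + x) ω ∈ U := hAω (s + x) (by omega)
              rw [hZ, hJ] at hin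
              exact hu hin
            have hz' : P i₀ (A ∩ C (u, x)) = 0 := by
              have hsplit2 := measure_inter_add_diff (μ := P i₀) (A ∩ C (u, x)) hGmeas
              have e1 : A ∩ C (u, x) ∩ Gset J S i₀ = ∅ := by
                rw [Set.inter_assoc]; exact hempty
              have e2 : P i₀ ((A ∩ C (u, x)) \ Gset J S i₀) = 0 :=
                le_antisymm (le_trans (measure_mono (Set.diff_subset_compl _ _))
                  hGnull.le) (zero_le)
              rw [e1, e2, add_zero] at hsplit2
              rw [← hsplit2]
              exact measure_empty (μ := P i₀)
            rw [hz']
            rw [show t (u, x) = if k < x then q i u x else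
              (if u ∈ U then q i u x * Rc q U (k - x) u else 0) from rfl]
            rw [if_neg (by omega), if_neg hu, mul_zero, ENNReal.ofReal_zero]
    -- summability of the weights
    have ht_nonneg : ∀ p : E × ℕ, 0 ≤ t p := by
      rintro ⟨u, x⟩
      rw [show t (u, x) = if k < x then q i u x else
        (if u ∈ U then q i u x * Rc q U (k - x) u else 0) from rfl]
      split
      · exact hq.1 _ _ _
      · split
        · exact mul_nonneg (hq.1 _ _ _) (hRcn _ _)
        · exact le_refl 0
    set B : ℝ := 1 + ∑ u', ∑ k' ∈ Finset.range (k+1), Rc q U k' u' with hB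
    have hB1 : 1 ≤ B := by
      rw [hB]
      have : (0:ℝ) ≤ ∑ u', ∑ k' ∈ Finset.range (k+1), Rc q U k' u' :=
        Finset.sum_nonneg fun u' _ => Finset.sum_nonneg fun k' _ => hRcn _ _
      linarith
    have hRcB : ∀ (u' : E) (k' : ℕ), k' ≤ k → Rc q U k' u' ≤ B := by
      intro u' k' hk'
      have h1 : Rc q U k' u' ≤ ∑ k'' ∈ Finset.range (k+1), Rc q U k'' u' :=
        Finset.single_le_sum (fun k'' _ => hRcn k'' u')
          (Finset.mem_range.mpr (by omega))
      have h2 : ∑ k'' ∈ Finset.range (k+1), Rc q U k'' u'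
          ≤ ∑ u'', ∑ k'' ∈ Finset.range (k+1), Rc q U k'' u'' :=
        Finset.single_le_sum
          (fun u'' _ => Finset.sum_nonneg fun k'' _ => hRcn k'' u'')
          (Finset.mem_univ u')
      rw [hB]; linarith
    have hqsummable : Summable (fun p : E × ℕ => q i p.1 p.2) := (hq.2.2 i).summable
    have ht_le : ∀ p : E × ℕ, t p ≤ B * q i p.1 p.2 := by
      rintro ⟨u, x⟩
      rw [show t (u, x) = if k < x then q i u x else
        (if u ∈ U then q i u x * Rc q U (k - x) u else 0) from rfl]
      split
      · nlinarith [hq.1 i u x, hB1]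
      · split
        · have := hRcB u (k - x) (by omega)
          nlinarith [hq.1 i u x, hRcn (k-x) u]
        · exact mul_nonneg (by linarith) (hq.1 _ _ _)
    have ht_summable : Summable t :=
      Summable.of_nonneg_of_le ht_nonneg ht_le (hqsummable.mul_left B)
    -- splitting the weight sum
    let t1 : E × ℕ → ℝ := fun p => if k < p.2 then q i p.1 p.2 else 0
    let t2 : E × ℕ → ℝ := fun p => if k < p.2 then 0 else
        (if p.1 ∈ U then q i p.1 p.2 * Rc q U (k - p.2) p.1 else 0)
    have ht12 : ∀ p, t p = t1 p + t2 p := by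
      rintro ⟨u, x⟩
      by_cases h : k < x <;> simp [t, t1, t2, h]
    have ht2supp : ∀ p ∉ (Finset.univ ×ˢ Finset.range (k+1) : Finset (E × ℕ)),
        t2 p = 0 := by
      rintro ⟨u, x⟩ hp
      simp only [Finset.mem_product, Finset.mem_univ, Finset.mem_range, true_and,
        not_lt] at hp
      rw [show t2 (u, x) = if k < x then 0 else
        (if u ∈ U then q i u x * Rc q U (k - x) u else 0) from rfl,
        if_pos (by omega)]
    have ht2sum : Summable t2 := summable_of_ne_finset_zero ht2supp
    have ht1sum : Summable t1 := by
      apply Summable.of_nonneg_of_le _ _ hqsummable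
      · rintro ⟨u, x⟩
        by_cases h : k < x <;> simp [t1, h, hq.1]
      · rintro ⟨u, x⟩
        by_cases h : k < x <;> simp [t1, h, hq.1]
    have htsum : ∑' p, t p = Rc q U k i := by
      rw [tsum_congr ht12, Summable.tsum_add ht1sum ht2sum, Rc_eq q U hq.2.1 k i]
      congr 1
      rw [tsum_eq_sum ht2supp, Finset.sum_product, Finset.sum_comm]
      apply Finset.sum_congr rfl
      intro x hx
      rw [Finset.mem_range] at hx
      apply Finset.sum_congr rfl
      intro u _
      rw [show t2 (u, x) = if k < x then 0 else
        (if u ∈ U then q i u x * Rc q U (k - x) u else 0) from rfl,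
        if_neg (by omega)]
    -- putting everything together
    calc P i₀ (A ∩ Cyl J S n js xs) = ∑' p : E × ℕ, P i₀ (A ∩ C p) := hsplit
      _ = ∑' p : E × ℕ, ENNReal.ofReal (W * t p) := tsum_congr hval
      _ = ENNReal.ofReal (∑' p : E × ℕ, W * t p) :=
          (ENNReal.ofReal_tsum_of_nonneg
            (fun p => mul_nonneg hW0 (ht_nonneg p)) (ht_summable.mul_left W)).symm
      _ = ENNReal.ofReal (W * ∑' p : E × ℕ, t p) := by rw [tsum_mul_left]
      _ = ENNReal.ofReal (W * Rc q U k i) := by rw [htsum]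
/-- The reliability vector sequence satisfies the renewal equation
`R = (S q)_U + q_UU * R`, and consequently `R = ψ_UU * (S q)_U`. -/
theorem statement10 (q : E → E → ℕ → ℝ) (P : E → Measure Ω) (J : ℕ → Ω → E)
    (S : ℕ → Ω → ℕ) (hq : IsSemiMarkovKernel q)
    (hchain : IsMarkovRenewalChain P J S q)
    (U : Finset E) (hU : U.Nonempty) (hU' : U ≠ Finset.univ) :
    (∀ i ∈ U, ∀ k : ℕ,
        Rrel P J S U i k =
          diagOf (Sop q) i k + mvconv (restrictUU U q) (Rrel P J S U) i k) ∧
    ∀ i ∈ U, ∀ k : ℕ,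
      Rrel P J S U i k = mvconv (psiOf (restrictUU U q)) (diagOf (Sop q)) i k := by
  classical
  have hRcn := Rc_nonneg q U hq.1 hq.2.1
  have hmain : ∀ i ∈ U, ∀ k : ℕ, Rrel P J S U i k = Rc q U k i := by
    intro i hi k
    have hkey := key hq hchain U k i 0 (fun _ => i) (fun _ => 0) rfl rfl
      (fun l _ => hi)
    simp only [Finset.range_zero, Finset.sum_empty, Finset.prod_empty, one_mul,
      Nat.zero_add] at hkey
    have hm : MeasurableSet (Cyl J S 0 (fun _ => i) (fun _ => 0)) :=
      measurableSet_Cyl hchain.2.1 hchain.2.2.1 _ _ _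
    have hC0 : P i ((Cyl J S 0 (fun _ => i) (fun _ => 0))ᶜ) = 0 := by
      haveI := hchain.1 i
      have hsub : {ω | J 0 ω = i ∧ S 0 ω = 0}
          ⊆ Cyl J S 0 (fun _ => i) (fun _ => 0) := by
        intro ω hω l hl
        have hl0 : l = 0 := by omega
        subst hl0
        exact ⟨hω.1, Xproc_zero S ω⟩
      have h1 : P i (Cyl J S 0 (fun _ => i) (fun _ => 0)) = 1 := by
        have hge := measure_mono (μ := P i) hsub
        rw [hchain.2.2.2.1 i] at hge
        have hle : P i (Cyl J S 0 (fun _ => i) (fun _ => 0)) ≤ 1 := prob_le_one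
        exact le_antisymm hle hge
      rw [measure_compl hm (measure_ne_top _ _), h1]
      simp
    have hsetA : P i {ω | ∀ l ≤ k, Zproc J S l ω ∈ U}
        = ENNReal.ofReal (Rc q U k i) := by
      have hidd := measure_inter_add_diff (μ := P i)
        {ω | ∀ l ≤ k, Zproc J S l ω ∈ U} hm
      have hdz : P i ({ω | ∀ l ≤ k, Zproc J S l ω ∈ U}
          \ Cyl J S 0 (fun _ => i) (fun _ => 0)) = 0 :=
        le_antisymm (le_trans (measure_mono (Set.diff_subset_compl _ _)) hC0.le)
          (zero_le)
      rw [hdz, add_zero] at hidd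
      rw [← hidd, hkey]
    rw [Rrel, hsetA, ENNReal.toReal_ofReal (hRcn k i)]
  constructor
  · intro i hi k
    rw [hmain i hi k, Rc_eq q U hq.2.1 k i, diagOf_Sop_eq]
    congr 1
    unfold mvconv
    apply Finset.sum_congr rfl; intro l _
    apply Finset.sum_congr rfl; intro u _
    by_cases hu : u ∈ U
    · rw [if_pos hu, restrictUU, if_pos ⟨hi, hu⟩, hmain u hu (k - l)]
    · rw [if_neg hu, restrictUU, if_neg (by tauto), zero_mul]
  · intro i hi k
    rw [hmain i hi k]
    exact Rc_eq_mvconv q U hq.2.1 k i hi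

end SMCPaper
end
end

section
/- Let Z^q = (Z^q_{ij}(k))_{(i,j,k)∈Ẽ} be a centered Gaussian family with covariance V^q_{(i,j,k)(i',j',k')} = μ_{ii} 1{i=i'} q_{ij}(k)(1{j=j', k=k'} − q_{i'j'}(k')). Then for every i ∈ E, ∑_{j∈E} ∑_{k≤K} Z^q_{ij}(k) → 0 in L² as K → ∞; consequently S Z^q is well-defined (the defining series converges in L²) and (S Z^q)_{ij}(k) = − 1{i=j} ∑_{j'∈E} ∑_{k'≤k} Z^q_{ij'}(k') for all (i,j,k) ∈ Ẽ. -/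
open MeasureTheory Filter Topology Finset ProbabilityTheory

noncomputable section

namespace SMCPaper

variable {E : Type} [Fintype E] [DecidableEq E] {Ω : Type} [MeasurableSpace Ω]

open scoped ENNReal NNReal

lemma sq_ennnorm_eq (x : ℝ) : ((‖x‖₊ : ℝ≥0∞)) ^ (2:ℝ) = ENNReal.ofReal (x ^ 2) := by
  rw [← enorm_eq_nnnorm, Real.enorm_eq_ofReal_abs, ENNReal.ofReal_rpow_of_nonneg (abs_nonneg x) (by norm_num)]
  congr 1
  rw [show (2:ℝ) = ((2:ℕ):ℝ) by norm_num, Real.rpow_natCast, sq_abs]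

lemma gaussMoment_lt_top :
    (∫⁻ x : ℝ, (‖x‖₊ : ℝ≥0∞) ^ (2:ℝ) ∂(gaussianReal 0 1)) < ∞ := by
  rw [gaussianReal_of_var_ne_zero 0 one_ne_zero,
    lintegral_withDensity_eq_lintegral_mul _ (measurable_gaussianPDF 0 1)
      (measurable_nnnorm.coe_nnreal_ennreal.pow_const _)]
  simp only [Pi.mul_apply]
  have hpt : ∀ x : ℝ, gaussianPDF 0 1 x * (‖x‖₊ : ℝ≥0∞) ^ (2:ℝ)
      = ENNReal.ofReal (x ^ 2 * gaussianPDFReal 0 1 x) := by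
    intro x
    rw [gaussianPDF, sq_ennnorm_eq, ← ENNReal.ofReal_mul (gaussianPDFReal_nonneg 0 1 x),
      mul_comm]
  simp_rw [hpt]
  have hint : Integrable (fun x : ℝ => x ^ 2 * gaussianPDFReal 0 1 x) := by
    have h2 : Integrable (fun x : ℝ => x ^ (2:ℕ) * Real.exp (-(1/2) * x ^ 2)) := by
      have := integrable_rpow_mul_exp_neg_mul_sq (by norm_num : (0:ℝ) < 1/2)
        (by norm_num : (-1:ℝ) < 2)
      have h3 : ∀ x : ℝ, x ^ (2:ℝ) = x ^ (2:ℕ) := by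
        intro x
        rw [show (2:ℝ) = ((2:ℕ):ℝ) by norm_num, Real.rpow_natCast]
      simpa only [h3] using this
    have := h2.const_mul ((Real.sqrt (2 * Real.pi))⁻¹)
    refine this.congr ?_
    filter_upwards with x
    simp only [gaussianPDFReal, NNReal.coe_one, mul_one, sub_zero]
    ring_nf
  calc (∫⁻ x : ℝ, ENNReal.ofReal (x ^ 2 * gaussianPDFReal 0 1 x))
      ≤ ∫⁻ x : ℝ, (‖x ^ 2 * gaussianPDFReal 0 1 x‖₊ : ℝ≥0∞) :=
        lintegral_mono fun x => Real.ofReal_le_enorm _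
    _ < ∞ := hint.hasFiniteIntegral

lemma lintegral_sq_gaussianReal (w : ℝ≥0) :
    (∫⁻ x : ℝ, (‖x‖₊ : ℝ≥0∞) ^ (2:ℝ) ∂(gaussianReal 0 w))
      = (w : ℝ≥0∞) * ∫⁻ x : ℝ, (‖x‖₊ : ℝ≥0∞) ^ (2:ℝ) ∂(gaussianReal 0 1) := by
  have hsq : (⟨(Real.sqrt w) ^ 2, sq_nonneg _⟩ : ℝ≥0) * 1 = w := by
    ext
    simp [Real.sq_sqrt w.coe_nonneg]
  have hmap : gaussianReal 0 w = (gaussianReal 0 1).map (fun x => (Real.sqrt w) * x) := by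
    rw [gaussianReal_map_const_mul (Real.sqrt w), mul_zero]
    exact congrArg (gaussianReal 0) hsq.symm
  rw [hmap, lintegral_map (measurable_nnnorm.coe_nnreal_ennreal.pow_const _)
    (measurable_const_mul _)]
  simp_rw [nnnorm_mul, ENNReal.coe_mul,
    ENNReal.mul_rpow_of_nonneg _ _ (by norm_num : (0:ℝ) ≤ 2)]
  rw [lintegral_const_mul _ (measurable_nnnorm.coe_nnreal_ennreal.pow_const _)]
  congr 1
  rw [sq_ennnorm_eq, Real.sq_sqrt w.coe_nonneg]
  simp [ENNReal.ofReal_coe_nnreal]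

lemma eLpNorm_of_gaussian {Ω : Type} [MeasurableSpace Ω] (P : Measure Ω) {f : Ω → ℝ}
    (hf : Measurable f) (w : ℝ≥0) (h : Measure.map f P = gaussianReal 0 w) :
    eLpNorm f 2 P
      = ((w : ℝ≥0∞) * ∫⁻ x : ℝ, (‖x‖₊ : ℝ≥0∞) ^ (2:ℝ) ∂(gaussianReal 0 1)) ^ (1/2 : ℝ) := by
  have key : (∫⁻ ω, (‖f ω‖₊ : ℝ≥0∞) ^ (2:ℝ) ∂P)
      = (w : ℝ≥0∞) * ∫⁻ x : ℝ, (‖x‖₊ : ℝ≥0∞) ^ (2:ℝ) ∂(gaussianReal 0 1) := by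
    rw [← lintegral_sq_gaussianReal, ← h,
      lintegral_map (measurable_nnnorm.coe_nnreal_ennreal.pow_const _) hf]
  rw [eLpNorm_eq_lintegral_rpow_enorm_toReal (by norm_num) (by norm_num),
    show ((2:ℝ≥0∞).toReal) = (2:ℝ) by norm_num]
  exact congrArg (fun t => t ^ (1/2:ℝ)) key

/-- Partial mass of the kernel row `i` up to time `K`. -/
def Hpart (q : E → E → ℕ → ℝ) (i : E) (K : ℕ) : ℝ :=
  ∑ p ∈ (Finset.univ : Finset E) ×ˢ Finset.range (K+1), q i p.1 p.2

lemma var_sum (F : Finset (E × ℕ)) (c : ℝ) (Q : E × ℕ → ℝ) :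
    ∑ p ∈ F, ∑ p' ∈ F,
        (c * Q p * ((if p.1 = p'.1 ∧ p.2 = p'.2 then (1:ℝ) else 0) - Q p'))
      = c * ((∑ p ∈ F, Q p) * (1 - ∑ p ∈ F, Q p)) := by
  have hinner : ∀ p ∈ F, ∑ p' ∈ F,
      (c * Q p * ((if p.1 = p'.1 ∧ p.2 = p'.2 then (1:ℝ) else 0) - Q p'))
        = c * Q p * (1 - ∑ p' ∈ F, Q p') := by
    intro p hp
    rw [← Finset.mul_sum, Finset.sum_sub_distrib]
    have hone : ∑ p' ∈ F, (if p.1 = p'.1 ∧ p.2 = p'.2 then (1:ℝ) else 0) = 1 := by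
      have hcond : ∀ p' : E × ℕ,
          (if p.1 = p'.1 ∧ p.2 = p'.2 then (1:ℝ) else 0) = if p' = p then 1 else 0 := by
        intro p'
        by_cases h : p' = p
        · subst h; simp
        · rw [if_neg h, if_neg]
          intro hc
          exact h ((Prod.ext hc.1 hc.2).symm)
      simp_rw [hcond]
      rw [Finset.sum_ite_eq' F p (fun _ => (1:ℝ)), if_pos hp]
    rw [hone]
  rw [Finset.sum_congr rfl hinner]
  calc ∑ p ∈ F, c * Q p * (1 - ∑ p' ∈ F, Q p')
      = (∑ p ∈ F, Q p) * (c * (1 - ∑ p' ∈ F, Q p')) := by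
        rw [Finset.sum_mul]
        exact Finset.sum_congr rfl fun p _ => by ring
    _ = c * ((∑ p ∈ F, Q p) * (1 - ∑ p ∈ F, Q p)) := by ring

lemma rowsum_tendsto (P : Measure Ω) (q : E → E → ℕ → ℝ) (hq : IsSemiMarkovKernel q)
    (μr : E → ℝ) (Z : (E × E × ℕ) → Ω → ℝ)
    (hZ : IsCenteredGaussianFamily P Z (Vq q μr)) (i : E) :
    Tendsto (fun K : ℕ =>
        eLpNorm (fun ω => ∑ j : E, ∑ k ∈ Finset.range (K+1), Z (i, j, k) ω) 2 P)
      atTop (𝓝 0) := by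
  have key : ∀ K : ℕ,
      eLpNorm (fun ω => ∑ j : E, ∑ k ∈ Finset.range (K+1), Z (i, j, k) ω) 2 P
        = ((Real.toNNReal (μr i * (Hpart q i K * (1 - Hpart q i K))) : ℝ≥0∞)
            * ∫⁻ x : ℝ, (‖x‖₊ : ℝ≥0∞) ^ (2:ℝ) ∂(gaussianReal 0 1)) ^ (1/2 : ℝ) := by
    intro K
    classical
    set F : Finset (E × ℕ) := (Finset.univ : Finset E) ×ˢ Finset.range (K+1) with hF
    set s : Finset (E × E × ℕ) := {i} ×ˢ F with hs
    set a : (E × E × ℕ) →₀ ℝ := Finsupp.indicator s (fun _ _ => (1:ℝ)) with haa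
    have ha : ∀ e ∈ s, a e = 1 := fun e he => Finsupp.indicator_of_mem he _
    have hsupp : a.support = s := by
      ext e
      simp [haa, Finsupp.mem_support_iff, Finsupp.indicator_apply]
    have hfun : ∀ ω, ∑ e ∈ a.support, a e * Z e ω
        = ∑ j : E, ∑ k ∈ Finset.range (K+1), Z (i, j, k) ω := by
      intro ω
      rw [hsupp, Finset.sum_congr rfl (fun e he => by rw [ha e he, one_mul]), hs, hF]
      rw [Finset.sum_product, Finset.sum_singleton, Finset.sum_product]
    have hVq : ∀ p p' : E × ℕ, Vq q μr (i, p) (i, p')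
        = μr i * q i p.1 p.2 * ((if p.1 = p'.1 ∧ p.2 = p'.2 then (1:ℝ) else 0)
            - q i p'.1 p'.2) := by
      intro p p'
      simp only [Vq, entry, if_true, mul_one]
    have hvar : ∑ e ∈ a.support, ∑ e' ∈ a.support, a e * Vq q μr e e' * a e'
        = μr i * (Hpart q i K * (1 - Hpart q i K)) := by
      rw [hsupp]
      calc ∑ e ∈ s, ∑ e' ∈ s, a e * Vq q μr e e' * a e'
          = ∑ e ∈ s, ∑ e' ∈ s, Vq q μr e e' := by
            refine Finset.sum_congr rfl fun e he => Finset.sum_congr rfl fun e' he' => ?_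
            rw [ha e he, ha e' he', one_mul, mul_one]
        _ = ∑ p ∈ F, ∑ p' ∈ F, Vq q μr (i, p) (i, p') := by
            rw [hs]
            simp_rw [Finset.sum_product, Finset.sum_singleton]
        _ = ∑ p ∈ F, ∑ p' ∈ F,
              (μr i * q i p.1 p.2 * ((if p.1 = p'.1 ∧ p.2 = p'.2 then (1:ℝ) else 0)
                - q i p'.1 p'.2)) := by
            simp_rw [hVq]
        _ = μr i * (Hpart q i K * (1 - Hpart q i K)) := var_sum F (μr i) _
    have hmeas : Measurable (fun ω => ∑ j : E, ∑ k ∈ Finset.range (K+1), Z (i, j, k) ω) :=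
      Finset.measurable_sum _ fun j _ => Finset.measurable_sum _ fun k _ => hZ.1 (i, j, k)
    have hg := hZ.2 a
    rw [hvar] at hg
    have hg' : Measure.map (fun ω => ∑ j : E, ∑ k ∈ Finset.range (K+1), Z (i, j, k) ω) P
        = gaussianReal 0 (Real.toNNReal (μr i * (Hpart q i K * (1 - Hpart q i K)))) := by
      rw [← hg]
      congr 1
      funext ω
      rw [hfun ω]
    exact eLpNorm_of_gaussian P hmeas _ hg'
  have hH : Tendsto (fun K => Hpart q i K) atTop (𝓝 1) := by
    have hs' : Tendsto (fun t : Finset (E × ℕ) => ∑ p ∈ t, q i p.1 p.2) atTop (𝓝 1) :=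
      hq.2.2 i
    have ht : Tendsto (fun K : ℕ => (Finset.univ : Finset E) ×ˢ Finset.range (K+1))
        atTop atTop := by
      apply tendsto_atTop_finset_of_monotone
      · intro K1 K2 h
        exact Finset.product_subset_product (Finset.Subset.refl _)
          (Finset.range_subset_range.2 (by omega))
      · intro p
        exact ⟨p.2, Finset.mem_product.2
          ⟨Finset.mem_univ _, Finset.mem_range.2 (Nat.lt_succ_self _)⟩⟩
    exact hs'.comp ht
  have hv0 : Tendsto (fun K => μr i * (Hpart q i K * (1 - Hpart q i K))) atTop (𝓝 0) := by
    have := (hH.mul ((tendsto_const_nhds :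
      Tendsto (fun _ : ℕ => (1:ℝ)) atTop (𝓝 1)).sub hH)).const_mul (μr i)
    simpa using this
  have hnn : Tendsto
      (fun K => ((Real.toNNReal (μr i * (Hpart q i K * (1 - Hpart q i K)))) : ℝ≥0∞))
      atTop (𝓝 0) := by
    rw [show (0:ℝ≥0∞) = ((0:ℝ≥0) : ℝ≥0∞) by rfl]
    refine ENNReal.tendsto_coe.2 ?_
    have := (continuous_real_toNNReal.tendsto 0).comp hv0
    simpa [Function.comp_def] using this
  have hfin := (ENNReal.Tendsto.mul_const hnn
    (Or.inr gaussMoment_lt_top.ne)).ennrpow_const (1/2)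
  rw [zero_mul, ENNReal.zero_rpow_of_pos (by norm_num)] at hfin
  exact Tendsto.congr (fun K => (key K).symm) hfin


/-- Lemma 4.6 of the paper: if `Z^q` is a centered Gaussian family with covariance
`V^q`, then for every `i` the row sums `∑_{j} ∑_{k ≤ K} Z^q_{ij}(k)` converge to `0`
in `L²` as `K → ∞`; consequently `S Z^q` is well-defined (its defining partial sums
converge in `L²`) and `(S Z^q)_{ij}(k) = −1{i=j} ∑_{j'} ∑_{k' ≤ k} Z^q_{ij'}(k')`. -/
theorem statement14 (P : Measure Ω) (hP : IsProbabilityMeasure P)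
    (q : E → E → ℕ → ℝ) (hq : IsSemiMarkovKernel q)
    (μr : E → ℝ) (hμr : ∀ i, 0 ≤ μr i)
    (Z : (E × E × ℕ) → Ω → ℝ)
    (hZ : IsCenteredGaussianFamily P Z (Vq q μr)) :
    (∀ i : E,
      Tendsto (fun K : ℕ =>
          eLpNorm (fun ω => ∑ j : E, ∑ k ∈ Finset.range (K+1), Z (i, j, k) ω) 2 P)
        atTop (𝓝 0)) ∧
    ∀ (i j : E) (k : ℕ),
      Tendsto (fun K : ℕ =>
          eLpNorm (fun ω =>
            (if i = j then ∑ j' : E, ∑ k' ∈ Finset.Ioc k K, Z (i, j', k') ω else 0) -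
              (-(if i = j then
                  ∑ j' : E, ∑ k' ∈ Finset.range (k+1), Z (i, j', k') ω else 0))) 2 P)
        atTop (𝓝 0) := by
  constructor
  · intro i
    exact rowsum_tendsto P q hq μr Z hZ i
  · intro i j k
    by_cases hij : i = j
    · subst hij
      apply Tendsto.congr' _ (rowsum_tendsto P q hq μr Z hZ i)
      filter_upwards [eventually_ge_atTop k] with K hK
      congr 1
      funext ω
      rw [if_pos rfl, if_pos rfl, sub_neg_eq_add, ← Finset.sum_add_distrib]
      refine Finset.sum_congr rfl fun j' _ => ?_
      have hsplit : Finset.range (K+1) = Finset.range (k+1) ∪ Finset.Ioc k K := by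
        ext n
        simp only [Finset.mem_range, Finset.mem_union, Finset.mem_Ioc, Nat.lt_succ_iff]
        omega
      have hdisj : Disjoint (Finset.range (k+1)) (Finset.Ioc k K) := by
        rw [Finset.disjoint_left]
        intro n hn hn2
        simp only [Finset.mem_range, Nat.lt_succ_iff] at hn
        simp only [Finset.mem_Ioc] at hn2
        omega
      rw [hsplit, Finset.sum_union hdisj, add_comm]
    · refine Tendsto.congr (fun K => ?_) tendsto_const_nhds
      have : (fun ω : Ω =>
          (if i = j then ∑ j' : E, ∑ k' ∈ Finset.Ioc k K, Z (i, j', k') ω else 0) -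
            (-(if i = j then
                ∑ j' : E, ∑ k' ∈ Finset.range (k+1), Z (i, j', k') ω else 0)))
          = fun _ : Ω => (0:ℝ) := by
        funext ω
        rw [if_neg hij, if_neg hij, neg_zero, sub_zero]
      rw [this, eLpNorm_zero']

end SMCPaper
end
end

section
/- The diagonal entries of the covariance matrix V^ψ := ∑_{ẽ∈Ẽ} q̄_{ẽ} (ψ * δ^{ẽ} * ψ)^{⊗2} − ∑_{ĩ∈E} μ_{ĩĩ} (ψ * q^{ĩ} * ψ)^{⊗2} are given, for e = (i,j,k) ∈ Ẽ, by V^ψ_{ee} = ∑_{ĩ∈E} μ_{ĩĩ} { ∑_{j̃∈E} [(ψ_{iĩ} * ψ_{j̃j})² * q_{ĩj̃}](k) − [∑_{j̃∈E} (ψ_{iĩ} * q_{ĩj̃} * ψ_{j̃j})(k)]² }. -/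
open MeasureTheory Filter Topology Finset ProbabilityTheory

noncomputable section

namespace SMCPaper

variable {E : Type} [Fintype E] [DecidableEq E] {Ω : Type} [MeasurableSpace Ω]

/-- The asymptotic covariance matrix `V^ψ` for the convolution-inverse estimator. -/
def Vpsi (q : E → E → ℕ → ℝ) (μr : E → ℝ) : (E × E × ℕ) → (E × E × ℕ) → ℝ := fun e e' =>
  (∑' et : E × E × ℕ,
      μr et.1 * entry q et *
        (entry (mconv (mconv (psiOf q) (deltaM et)) (psiOf q)) e *
          entry (mconv (mconv (psiOf q) (deltaM et)) (psiOf q)) e')) -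
    ∑ it, μr it *
      (entry (mconv (mconv (psiOf q) (qres q it)) (psiOf q)) e *
        entry (mconv (mconv (psiOf q) (qres q it)) (psiOf q)) e')

/-- The asymptotic variance `v^ψ(i,j,k)` for the convolution-inverse estimator. -/
def vpsi (q : E → E → ℕ → ℝ) (μr : E → ℝ) (i j : E) (k : ℕ) : ℝ :=
  ∑ it, μr it *
    ((∑ jt, sconv (fun l => (sconv (psiOf q i it) (psiOf q jt j) l)^2) (q it jt) k) -
     (∑ jt, sconv (sconv (psiOf q i it) (q it jt)) (psiOf q jt j) k)^2)

lemma sum_shift (f g : ℕ → ℝ) (kt k : ℕ) (h : kt ≤ k) :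
    ∑ l ∈ Finset.range (k+1), (if kt ≤ l then f (l - kt) else 0) * g (k - l)
      = ∑ m ∈ Finset.range (k - kt + 1), f m * g (k - kt - m) := by
  rw [Finset.range_eq_Ico,
    ← Finset.sum_Ico_consecutive _ (Nat.zero_le kt) (by omega : kt ≤ k+1)]
  have h0 : ∑ l ∈ Finset.Ico 0 kt, (if kt ≤ l then f (l - kt) else 0) * g (k - l) = 0 := by
    apply Finset.sum_eq_zero; intro l hl
    rw [Finset.mem_Ico] at hl
    rw [if_neg (by omega), zero_mul]
  rw [h0, zero_add, Finset.sum_Ico_eq_sum_range]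
  have hn : k + 1 - kt = k - kt + 1 := by omega
  rw [hn]
  apply Finset.sum_congr rfl
  intro m hm
  rw [Finset.mem_range] at hm
  rw [if_pos (by omega)]
  congr 2 <;> omega

lemma entry_delta (ψ : E → E → ℕ → ℝ) (it jt : E) (kt : ℕ) (i j : E) (k : ℕ) :
    entry (mconv (mconv ψ (deltaM (it, jt, kt))) ψ) (i, j, k)
      = if kt ≤ k then sconv (ψ i it) (ψ jt j) (k - kt) else 0 := by
  have h1 : ∀ u l, mconv ψ (deltaM (it, jt, kt)) i u l
      = if u = jt ∧ kt ≤ l then ψ i it (l - kt) else 0 := by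
    intro u l
    unfold mconv deltaM
    simp only [Prod.mk.injEq, mul_ite, mul_one, mul_zero]
    rw [Finset.sum_comm, Finset.sum_eq_single it]
    · by_cases hu : u = jt
      · by_cases hl : kt ≤ l
        · rw [if_pos ⟨hu, hl⟩, Finset.sum_eq_single (l - kt)]
          · rw [if_pos ⟨rfl, hu, by omega⟩]
          · intro m hm hne
            rw [Finset.mem_range] at hm
            rw [if_neg]; push_neg; intro _ _; omega
          · intro h; exact absurd (Finset.mem_range.2 (by omega)) h
        · rw [if_neg (by tauto)]
          apply Finset.sum_eq_zero; intro m hm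
          rw [Finset.mem_range] at hm
          rw [if_neg]; push_neg; intro _ _; omega
      · rw [if_neg (by tauto)]
        apply Finset.sum_eq_zero; intro m _
        exact if_neg (by tauto)
    · intro u' _ hne
      apply Finset.sum_eq_zero; intro m _
      exact if_neg (by tauto)
    · intro h; exact absurd (Finset.mem_univ it) h
  have h2 : ∀ l, ∑ u, mconv ψ (deltaM (it, jt, kt)) i u l * ψ u j (k - l)
      = (if kt ≤ l then ψ i it (l - kt) else 0) * ψ jt j (k - l) := by
    intro l
    simp_rw [h1, ite_mul, zero_mul]
    by_cases hl : kt ≤ l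
    · simp only [hl, and_true, if_true]
      rw [Finset.sum_ite_eq' Finset.univ jt (fun u => ψ i it (l - kt) * ψ u j (k - l)),
        if_pos (Finset.mem_univ jt)]
    · simp [hl]
  show ∑ l ∈ Finset.range (k+1), ∑ u,
      mconv ψ (deltaM (it, jt, kt)) i u l * ψ u j (k - l) = _
  rw [Finset.sum_congr rfl fun l _ => h2 l]
  by_cases hk : kt ≤ k
  · rw [if_pos hk]
    exact sum_shift (ψ i it) (ψ jt j) kt k hk
  · rw [if_neg hk]
    apply Finset.sum_eq_zero; intro l hl
    rw [Finset.mem_range] at hl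
    rw [if_neg (by omega), zero_mul]

lemma entry_qres (ψ q : E → E → ℕ → ℝ) (it : E) (i j : E) (k : ℕ) :
    entry (mconv (mconv ψ (qres q it)) ψ) (i, j, k)
      = ∑ jt, sconv (sconv (ψ i it) (q it jt)) (ψ jt j) k := by
  have h1 : ∀ u l, mconv ψ (qres q it) i u l = sconv (ψ i it) (q it u) l := by
    intro u l
    unfold mconv qres sconv
    apply Finset.sum_congr rfl
    intro m _
    simp_rw [mul_ite, mul_zero]
    rw [Finset.sum_ite_eq' Finset.univ it (fun u' => ψ i u' m * q u' u (l - m)),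
      if_pos (Finset.mem_univ it)]
  show ∑ l ∈ Finset.range (k+1), ∑ u,
      mconv ψ (qres q it) i u l * ψ u j (k - l) = _
  simp_rw [h1]
  exact Finset.sum_comm

/-- The diagonal entries of `V^ψ` coincide with the one-dimensional asymptotic
variance `v^ψ` (Appendix A.1 of the paper). -/
theorem statement17 (q : E → E → ℕ → ℝ) (hq : IsSemiMarkovKernel q)
    (μr : E → ℝ) (hμr : ∀ i, 0 ≤ μr i) (i j : E) (k : ℕ) :
    Vpsi q μr (i, j, k) (i, j, k) = vpsi q μr i j k := by
  classical
  unfold Vpsi vpsi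
  have hvan : ∀ et : E × E × ℕ,
      et ∉ (Finset.univ ×ˢ Finset.univ ×ˢ Finset.range (k+1) : Finset (E × E × ℕ)) →
      μr et.1 * entry q et *
        (entry (mconv (mconv (psiOf q) (deltaM et)) (psiOf q)) (i, j, k) *
          entry (mconv (mconv (psiOf q) (deltaM et)) (psiOf q)) (i, j, k)) = 0 := by
    rintro ⟨it, jt, kt⟩ hmem
    simp only [Finset.mem_product, Finset.mem_univ, Finset.mem_range, true_and] at hmem
    rw [entry_delta, if_neg (by omega)]
    ring
  rw [tsum_eq_sum hvan, Finset.sum_product]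
  have hsplit : ∀ it : E, μr it *
      ((∑ jt, sconv (fun l => (sconv (psiOf q i it) (psiOf q jt j) l)^2) (q it jt) k) -
       (∑ jt, sconv (sconv (psiOf q i it) (q it jt)) (psiOf q jt j) k)^2)
      = μr it * (∑ jt, sconv (fun l => (sconv (psiOf q i it) (psiOf q jt j) l)^2) (q it jt) k)
        - μr it * (∑ jt, sconv (sconv (psiOf q i it) (q it jt)) (psiOf q jt j) k)^2 :=
    fun it => by ring
  rw [Finset.sum_congr rfl fun it _ => hsplit it, Finset.sum_sub_distrib]
  congr 1
  · -- first (δ-part) sums agree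
    apply Finset.sum_congr rfl
    intro it _
    rw [Finset.sum_product, Finset.mul_sum]
    apply Finset.sum_congr rfl
    intro jt _
    have hA : ∀ kt ∈ Finset.range (k+1),
        μr (it, jt, kt).1 * entry q (it, jt, kt) *
          (entry (mconv (mconv (psiOf q) (deltaM (it, jt, kt))) (psiOf q)) (i, j, k) *
            entry (mconv (mconv (psiOf q) (deltaM (it, jt, kt))) (psiOf q)) (i, j, k))
        = μr it * (q it jt kt * (sconv (psiOf q i it) (psiOf q jt j) (k - kt))^2) := by
      intro kt hkt
      rw [Finset.mem_range] at hkt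
      rw [entry_delta, if_pos (by omega : kt ≤ k)]
      show μr it * q it jt kt * _ = _
      ring
    rw [Finset.sum_congr rfl hA, ← Finset.mul_sum]
    congr 1
    unfold sconv
    conv_rhs => rw [← Finset.sum_range_reflect
      (fun m => (∑ l ∈ Finset.range (m+1), psiOf q i it l * psiOf q jt j (m - l))^2
        * q it jt (k - m)) (k+1)]
    apply Finset.sum_congr rfl
    intro kt hkt
    rw [Finset.mem_range] at hkt
    have e1 : k + 1 - 1 - kt = k - kt := by omega
    have e2 : k - (k - kt) = kt := by omega
    simp only [e1, e2]
    ring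
  · -- second (qres-part) sums agree
    apply Finset.sum_congr rfl
    intro it _
    rw [entry_qres (psiOf q) q it i j k, pow_two]

end SMCPaper
end
end
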